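/- arXiv:1510.03573 — 6 statements merged into one kernel-verified Lean document; each statement's English description precedes it below -/
import Mathlib

section
/- Let (A, m, k) be a complete local ring and B = A[[X]]. Let f = Σ a_i X^i ∈ B be nonzero, and suppose there exists n ∈ ℕ such that a_i ∈ m for all i < n and a_n ∉ m. Then f = u·f₀ where u is a unit of B and f₀ is a distinguished polynomial of degree n (i.e., f₀ = X^n + c_{n-1}X^{n-1} + ... + c₀ with all c_i ∈ m), and u and f₀ are uniquely determined by f. -/
open IsLocalRing PowerSeries

namespace WPrep

variable {A : Type*} [CommRing A]

noncomputable def shift (n : ℕ) (f : PowerSeries A) : PowerSeries A :=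
  PowerSeries.mk fun i => coeff (i + n) f

@[simp] lemma coeff_shift (n i : ℕ) (f : PowerSeries A) :
    coeff i (shift n f) = coeff (i + n) f := coeff_mk _ _

lemma shift_sub (n : ℕ) (a b : PowerSeries A) :
    shift n (a - b) = shift n a - shift n b := by
  ext i; simp

lemma coeff_mul_mem_left (J : Ideal A) {a : PowerSeries A}
    (ha : ∀ i, coeff i a ∈ J) (b : PowerSeries A) (i : ℕ) :
    coeff i (b * a) ∈ J := by
  rw [coeff_mul]
  exact Ideal.sum_mem _ fun p _ => J.mul_mem_left _ (ha p.2)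

lemma coeff_mul_mem_mul {J K : Ideal A} {a b : PowerSeries A}
    (ha : ∀ i, coeff i a ∈ J) (hb : ∀ i, coeff i b ∈ K) (i : ℕ) :
    coeff i (a * b) ∈ J * K := by
  rw [coeff_mul]
  exact Ideal.sum_mem _ fun p _ => Ideal.mul_mem_mul (ha p.1) (hb p.2)

section Local

variable [IsLocalRing A] {f : PowerSeries A} {n : ℕ}

/-- the "tail" part, a unit. -/
lemma isUnit_shift (h2 : coeff n f ∉ maximalIdeal A) : IsUnit (shift n f) := by
  rw [isUnit_iff_constantCoeff, ← coeff_zero_eq_constantCoeff_apply]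
  simpa using notMem_maximalIdeal.mp h2

/-- decomposition f = P + X^n * h with P having coefficients in m -/
lemma coeff_P_mem (h1 : ∀ i < n, coeff i f ∈ maximalIdeal A) (i : ℕ) :
    coeff i (f - X ^ n * shift n f) ∈ maximalIdeal A := by
  rw [map_sub, coeff_X_pow_mul']
  split_ifs with h
  · obtain ⟨j, rfl⟩ := Nat.exists_eq_add_of_le h
    simp [Nat.add_sub_cancel_left, add_comm n j]
  · simpa using h1 i (not_le.mp h)

end Local


namespace Div

variable [IsLocalRing A] {f : PowerSeries A} {n : ℕ}

lemma smul_top_eq (k : ℕ) :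
    ((maximalIdeal A) ^ k • ⊤ : Submodule A A) = ((maximalIdeal A) ^ k : Ideal A) := by
  rw [smul_eq_mul, Ideal.mul_top]

theorem exists_division [IsAdicComplete (maximalIdeal A) A]
    (h1 : ∀ i < n, coeff i f ∈ maximalIdeal A)
    (h2 : coeff n f ∉ maximalIdeal A) (g : PowerSeries A) :
    ∃ q r : PowerSeries A, g = q * f + r ∧ ∀ i, n ≤ i → coeff i r = 0 := by
  obtain ⟨H, hH⟩ := isUnit_shift h2
  set m := maximalIdeal A
  set P := f - X ^ n * shift n f with hPdef
  have hP : ∀ i, coeff i P ∈ m := coeff_P_mem h1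
  set T := fun q : PowerSeries A =>
    (↑H⁻¹ : PowerSeries A) * (shift n g - shift n (P * q)) with hT
  have hcontr : ∀ (J : Ideal A) (q q' : PowerSeries A),
      (∀ i, coeff i (q - q') ∈ J) → ∀ i, coeff i (T q - T q') ∈ m * J := by
    intro J q q' hq i
    have e : T q - T q' =
        (↑H⁻¹ : PowerSeries A) * shift n (P * (q' - q)) := by
      rw [hT]; dsimp only
      conv_rhs => rw [mul_sub, shift_sub]
      ring
    rw [e]
    refine coeff_mul_mem_left _ (fun j => ?_) _ i
    rw [coeff_shift]
    exact coeff_mul_mem_mul hP (fun l => by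
      have := hq l
      have e2 : coeff l (q' - q) = -(coeff l (q - q')) := by
        rw [map_sub, map_sub]; ring
      rw [e2]; exact neg_mem this) _
  let q : ℕ → PowerSeries A := fun k => Nat.rec 0 (fun _ p => T p) k
  have hqsucc : ∀ k, q (k + 1) = T (q k) := fun _ => rfl
  have hstep : ∀ k i, coeff i (q (k + 1) - q k) ∈ m ^ k := by
    intro k
    induction k with
    | zero => intro i; simp [pow_zero, Ideal.one_eq_top]
    | succ k ih =>
      intro i
      have := hcontr (m ^ k) (q (k + 1)) (q k) ih i
      rw [pow_succ, mul_comm (m ^ k) m]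
      exact this
  have hcauchy : ∀ k l, k ≤ l → ∀ i, coeff i (q l - q k) ∈ m ^ k := by
    intro k l hkl
    induction l, hkl using Nat.le_induction with
    | base => intro i; simp
    | succ l hkl ih =>
      intro i
      have e : q (l + 1) - q k = (q (l + 1) - q l) + (q l - q k) := by ring
      rw [e, map_add]
      exact add_mem (Ideal.pow_le_pow_right hkl (hstep l i)) (ih i)
  have hpre : ∀ i : ℕ, ∃ L, ∀ k,
      (coeff i (q k)) ≡ L [SMOD ((m : Ideal A) ^ k • ⊤ : Submodule A A)] := by
    intro i
    refine IsPrecomplete.prec inferInstance ?_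
    intro a b hab
    rw [SModEq.sub_mem, smul_top_eq]
    have := hcauchy a b hab i
    have e : coeff i (q a) - coeff i (q b) = -(coeff i (q b - q a)) := by
      rw [map_sub]; ring
    rw [e]; exact neg_mem this
  choose L hL using hpre
  set Q := PowerSeries.mk L with hQdef
  have hQ : ∀ k i, coeff i (Q - q k) ∈ m ^ k := by
    intro k i
    have := (hL i k)
    rw [SModEq.sub_mem, smul_top_eq] at this
    have e : coeff i (Q - q k) = -(coeff i (q k) - L i) := by
      rw [map_sub, hQdef, coeff_mk]; ring
    rw [e]; exact neg_mem this
  have hfix : T Q = Q := by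
    ext i
    rw [← sub_eq_zero, ← map_sub]
    refine IsHausdorff.haus (IsAdicComplete.toIsHausdorff : IsHausdorff m A) _ fun k => ?_
    rw [SModEq.zero, smul_top_eq]
    have e : T Q - Q = (T Q - T (q k)) + -(Q - q (k + 1)) := by
      rw [hqsucc]; ring
    rw [e, map_add, map_neg]
    refine add_mem ?_ (neg_mem ?_)
    · have := hcontr (m ^ k) Q (q k) (fun i => hQ k i) i
      exact Ideal.pow_le_pow_right (Nat.le_succ k) (by
        rwa [← mul_comm (m ^ k) m, ← pow_succ] at this)
    · exact Ideal.pow_le_pow_right (Nat.le_succ k) (hQ (k + 1) i)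
  -- now extract the division
  have hHQ : (shift n f) * Q = shift n g - shift n (P * Q) := by
    conv_lhs => rw [← hH, ← hfix, hT]
    dsimp only
    rw [Units.mul_inv_cancel_left]
  refine ⟨Q, g - Q * f, by ring, ?_⟩
  intro i hi
  obtain ⟨j, rfl⟩ := Nat.exists_eq_add_of_le hi
  have hsplit : g - Q * f = (g - P * Q) - X ^ n * (shift n f * Q) := by
    rw [hPdef]; ring
  rw [hsplit, map_sub, add_comm n j, coeff_X_pow_mul]
  have e1 : coeff (j + n) (g - P * Q) = coeff j (shift n (g - P * Q)) := by
    rw [coeff_shift]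
  rw [e1, shift_sub, ← hHQ, sub_self]

theorem eq_zero_of_mul [IsAdicComplete (maximalIdeal A) A]
    (h1 : ∀ i < n, coeff i f ∈ maximalIdeal A)
    (h2 : coeff n f ∉ maximalIdeal A) {Q : PowerSeries A}
    (hQf : ∀ i, n ≤ i → coeff i (Q * f) = 0) : Q = 0 := by
  obtain ⟨H, hH⟩ := isUnit_shift h2
  set m := maximalIdeal A
  set P := f - X ^ n * shift n f with hPdef
  have hP : ∀ i, coeff i P ∈ m := coeff_P_mem h1
  have key : ∀ k i, coeff i Q ∈ m ^ k := by
    intro k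
    induction k with
    | zero => intro i; simp [pow_zero, Ideal.one_eq_top]
    | succ k ih =>
      have hQh : ∀ j, coeff j (shift n f * Q) ∈ m ^ (k + 1) := by
        intro j
        have h0 : coeff (j + n) (Q * f) = 0 := hQf _ (Nat.le_add_left n j)
        have hsplit : Q * f = Q * P + X ^ n * (shift n f * Q) := by
          rw [hPdef]; ring
        rw [hsplit, map_add, coeff_X_pow_mul] at h0
        have e : coeff j (shift n f * Q) = -(coeff (j + n) (Q * P)) :=
          by rw [add_comm] at h0; exact eq_neg_of_add_eq_zero_left h0
        rw [e]
        refine neg_mem ?_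
        rw [pow_succ]
        exact coeff_mul_mem_mul ih hP _
      intro i
      have e : Q = (↑H⁻¹ : PowerSeries A) * (shift n f * Q) := by
        rw [← hH, Units.inv_mul_cancel_left]
      rw [e]
      exact coeff_mul_mem_left _ hQh _ i
  ext i
  simp only [map_zero]
  refine IsHausdorff.haus (IsAdicComplete.toIsHausdorff : IsHausdorff m A) _ fun k => ?_
  rw [SModEq.zero, smul_top_eq]
  exact key k i

end Div

end WPrep

/-- `g` is a distinguished polynomial of degree `n` over the local ring `A`:
`g = X^n + a_{n-1} X^{n-1} + ⋯ + a_0` with all `a_i` in the maximal ideal. -/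
def IsDistinguishedOfDegree {A : Type*} [CommRing A] [IsLocalRing A]
    (g : PowerSeries A) (n : ℕ) : Prop :=
  coeff n g = 1 ∧ (∀ i < n, coeff i g ∈ maximalIdeal A) ∧ ∀ i, n < i → coeff i g = 0

/-- Weierstrass preparation theorem over a complete Noetherian local ring. -/
theorem weierstrass_preparation
    (A : Type*) [CommRing A] [IsLocalRing A] [IsNoetherianRing A]
    [IsAdicComplete (maximalIdeal A) A]
    (f : PowerSeries A) (hf : f ≠ 0) (n : ℕ)
    (h1 : ∀ i < n, coeff i f ∈ maximalIdeal A)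
    (h2 : coeff n f ∉ maximalIdeal A) :
    ∃! uf : (PowerSeries A)ˣ × PowerSeries A,
      IsDistinguishedOfDegree uf.2 n ∧ f = (uf.1 : PowerSeries A) * uf.2 := by
  obtain ⟨Q, r, hdiv, hr⟩ := WPrep.Div.exists_division h1 h2 (X ^ n)
  have hrm : ∀ i, i < n → coeff i r ∈ maximalIdeal A := by
    intro i hi
    have e : coeff i r = coeff i (X ^ n : PowerSeries A) - coeff i (Q * f) := by
      rw [hdiv, map_add]; ring
    rw [e, coeff_X_pow, if_neg (by omega), zero_sub]
    refine neg_mem ?_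
    rw [coeff_mul]
    refine Ideal.sum_mem _ fun p hp => Ideal.mul_mem_left _ _ (h1 p.2 ?_)
    rw [Finset.HasAntidiagonal.mem_antidiagonal] at hp
    omega
  have hQ0 : IsUnit (constantCoeff Q) := by
    by_contra hq
    have hq' : constantCoeff Q ∈ maximalIdeal A :=
      (mem_maximalIdeal _).mpr (mem_nonunits_iff.mpr hq)
    have h3 : coeff n r = 0 := hr n le_rfl
    have h4 : (1 : A) = coeff n (Q * f) := by
      have := congrArg (coeff n) hdiv
      rwa [map_add, coeff_X_pow, if_pos rfl, h3, add_zero] at this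
    have h5 : coeff n (Q * f) ∈ maximalIdeal A := by
      rw [coeff_mul]
      refine Ideal.sum_mem _ fun p hp => ?_
      rw [Finset.HasAntidiagonal.mem_antidiagonal] at hp
      rcases eq_or_lt_of_le (show p.2 ≤ n by omega) with hb | hb
      · have hp1 : p.1 = 0 := by omega
        rw [hp1]
        exact Ideal.mul_mem_right _ _
          (by rw [coeff_zero_eq_constantCoeff_apply]; exact hq')
      · exact Ideal.mul_mem_left _ _ (h1 p.2 hb)
    rw [← h4] at h5
    exact (Ideal.ne_top_iff_one _).mp (maximalIdeal.isMaximal A).ne_top h5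
  obtain ⟨U, hU⟩ := isUnit_iff_constantCoeff.mpr hQ0
  have hf0eq : (X : PowerSeries A) ^ n - r = Q * f := by rw [hdiv]; ring
  refine ⟨(U⁻¹, X ^ n - r), ⟨⟨?_, ?_, ?_⟩, ?_⟩, ?_⟩
  · rw [map_sub, coeff_X_pow, if_pos rfl, hr n le_rfl, sub_zero]
  · intro i hi
    rw [map_sub, coeff_X_pow, if_neg (by omega), zero_sub]
    exact neg_mem (hrm i hi)
  · intro i hi
    rw [map_sub, coeff_X_pow, if_neg (by omega), hr i (le_of_lt hi), sub_self]
  · show f = (↑U⁻¹ : PowerSeries A) * (X ^ n - r)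
    rw [hf0eq, ← hU, Units.inv_mul_cancel_left]
  · rintro ⟨u, d⟩ ⟨⟨hc1, hc2, hc3⟩, hfe⟩
    have hud : d = (↑u⁻¹ : PowerSeries A) * f := by
      rw [hfe, Units.inv_mul_cancel_left]
    have hd : ∀ i, n ≤ i → coeff i ((X : PowerSeries A) ^ n - d) = 0 := by
      intro i hi
      rcases eq_or_lt_of_le hi with rfl | hlt
      · rw [map_sub, coeff_X_pow, if_pos rfl, hc1, sub_self]
      · rw [map_sub, coeff_X_pow, if_neg (by omega), hc3 i hlt, sub_self]
    have e : ((↑u⁻¹ : PowerSeries A) - Q) * f = r - (X ^ n - d) := by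
      rw [sub_mul, ← hud, hdiv]; ring
    have hzero : ∀ i, n ≤ i → coeff i (((↑u⁻¹ : PowerSeries A) - Q) * f) = 0 := by
      intro i hi
      rw [e, map_sub, hr i hi, hd i hi, sub_self]
    have hu : (↑u⁻¹ : PowerSeries A) = Q :=
      sub_eq_zero.mp (WPrep.Div.eq_zero_of_mul h1 h2 hzero)
    have huU : u⁻¹ = U := Units.ext (by rw [hu, hU])
    have h1' : u = U⁻¹ := by rw [← huU, inv_inv]
    have h2' : d = X ^ n - r := by rw [hud, hu, ← hf0eq]
    rw [Prod.mk.injEq]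
    exact ⟨h1', h2'⟩
end

section
/- Let (A, m, k) be a d-dimensional Noetherian local ring whose maximal ideal m is minimally generated by d + h elements. Then there exist x₁, ..., x_{d+h} ∈ m such that m = (x₁, ..., x_{d+h}) and any d elements among x₁, ..., x_{d+h} form a system of parameters of A. -/
open IsLocalRing Order

section Aux
set_option linter.unusedSectionVars false
variable {A : Type*} [CommRing A] [IsLocalRing A] [IsNoetherianRing A]

lemma PAC.minPrimes_finite (I : Ideal A) : I.minimalPrimes.Finite := by
  rw [Ideal.minimalPrimes_eq_comap]
  exact (minimalPrimes.finite_of_isNoetherianRing _).image _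

noncomputable def PAC.mPt (A : Type*) [CommRing A] [IsLocalRing A] : PrimeSpectrum A :=
  ⟨maximalIdeal A, (maximalIdeal.isMaximal A).isPrime⟩

lemma PAC.le_mPt (P : PrimeSpectrum A) : P ≤ PAC.mPt A :=
  (PrimeSpectrum.asIdeal_le_asIdeal _ _).mp (le_maximalIdeal P.isPrime.ne_top)

lemma PAC.coheight_mPt : Order.coheight (PAC.mPt A) = 0 :=
  Order.coheight_eq_zero.mpr (fun Q _ => PAC.le_mPt Q)

lemma PAC.eq_mPt_of_le {P : PrimeSpectrum A} (h : maximalIdeal A ≤ P.asIdeal) : P = PAC.mPt A :=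
  le_antisymm (PAC.le_mPt P) ((PrimeSpectrum.asIdeal_le_asIdeal _ _).mp h)

lemma PAC.coheight_le_of_dim {d : ℕ} (hdim : ringKrullDim A = d) (P : PrimeSpectrum A) :
    Order.coheight P ≤ (d : ℕ∞) := by
  have h := Order.coheight_le_krullDim P
  rw [show Order.krullDim (PrimeSpectrum A) = ringKrullDim A from rfl, hdim] at h
  exact_mod_cast h

lemma PAC.key (d h : ℕ) (hdim : ringKrullDim A = d)
    (hmin : ∀ s : Finset A, Ideal.span (s : Set A) = maximalIdeal A → d + h ≤ s.card) :
    ∀ n, n ≤ d + h → ∃ x : Fin n → maximalIdeal A,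
      LinearIndependent (ResidueField A) (fun i => (maximalIdeal A).toCotangent (x i)) ∧
      ∀ (t : Finset (Fin n)) (P : PrimeSpectrum A), t.card ≤ d →
        Ideal.span (Subtype.val '' (x '' (t : Set (Fin n)))) ≤ P.asIdeal →
        Order.coheight P ≤ ((d - t.card : ℕ) : ℕ∞) := by
  classical
  intro n
  induction n with
  | zero =>
    intro _
    refine ⟨Fin.elim0, linearIndependent_empty_type, ?_⟩
    intro t P _ _
    have ht0 : t.card = 0 := Nat.le_zero.mp (le_trans (Finset.card_le_univ t) (by simp))
    rw [ht0, Nat.sub_zero]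
    exact PAC.coheight_le_of_dim hdim P
  | succ n ih =>
    intro hn1
    have hn : n < d + h := lt_of_lt_of_le (Nat.lt_succ_self n) hn1
    obtain ⟨x, hind, hP1⟩ := ih (le_of_lt hn)
    set X : Fin n → A := fun i => (x i : A) with hX
    have hXm : ∀ i, X i ∈ maximalIdeal A := fun i => (x i).2
    -- the bad primes to avoid
    set Bad : Set (PrimeSpectrum A) := {P | ∃ t : Finset (Fin n), t.card < d ∧
        P.asIdeal ∈ (Ideal.span (Subtype.val '' (x '' (t : Set (Fin n))))).minimalPrimes ∧
        Order.coheight P = ((d - t.card : ℕ) : ℕ∞)} with hBad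
    have hBadFin : Bad.Finite := by
      have h1 : Bad ⊆ PrimeSpectrum.asIdeal ⁻¹'
          (⋃ t : Finset (Fin n), (Ideal.span (Subtype.val '' (x '' (t : Set (Fin n))))).minimalPrimes) := by
        rintro P ⟨t, _, hPmin, _⟩
        exact Set.mem_preimage.mpr (Set.mem_iUnion.mpr ⟨t, hPmin⟩)
      refine Set.Finite.subset (Set.Finite.preimage ?_ ?_) h1
      · exact fun a _ b _ hab => PrimeSpectrum.ext hab
      · exact Set.finite_iUnion (fun t => PAC.minPrimes_finite _)
    set B : Ideal A := Ideal.span (Set.range X) ⊔ maximalIdeal A • maximalIdeal A with hB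
    have hspanX_le : Ideal.span (Set.range X) ≤ maximalIdeal A :=
      Ideal.span_le.mpr (by rintro _ ⟨i, rfl⟩; exact hXm i)
    have hMneB : ¬ maximalIdeal A ≤ B := by
      intro hle
      have h2 : maximalIdeal A ≤ Ideal.span (Set.range X) :=
        Submodule.le_of_le_smul_of_le_jacobson_bot (IsNoetherian.noetherian _)
          (IsLocalRing.jacobson_eq_maximalIdeal ⊥ bot_ne_top).ge hle
      have hfin : (Set.range X).Finite := Set.finite_range X
      have hspan : Ideal.span (↑hfin.toFinset : Set A) = maximalIdeal A := by
        rw [Set.Finite.coe_toFinset]; exact le_antisymm hspanX_le h2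
      have hcard := hmin _ hspan
      have hle2 : hfin.toFinset.card ≤ n := by
        have : hfin.toFinset ⊆ Finset.image X Finset.univ := by
          intro a ha
          simp only [Set.Finite.mem_toFinset, Set.mem_range] at ha
          obtain ⟨i, rfl⟩ := ha
          exact Finset.mem_image_of_mem X (Finset.mem_univ i)
        calc hfin.toFinset.card ≤ (Finset.image X Finset.univ).card := Finset.card_le_card this
          _ ≤ Finset.univ.card := Finset.card_image_le
          _ = n := by simp
      omega
    -- prime avoidance
    set T : Finset (Ideal A) := insert B (hBadFin.toFinset.image PrimeSpectrum.asIdeal) with hT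
    have havoid : ¬ ((maximalIdeal A : Set A) ⊆ ⋃ i ∈ (↑T : Set (Ideal A)), (id i : Ideal A)) := by
      rw [Ideal.subset_union_prime B B]
      · rintro ⟨I, hIT, hle⟩
        rcases Finset.mem_insert.mp hIT with rfl | hI
        · exact hMneB hle
        · obtain ⟨P, hPBad, rfl⟩ := Finset.mem_image.mp hI
          rw [Set.Finite.mem_toFinset] at hPBad
          obtain ⟨t, htd, _, hch⟩ := hPBad
          rw [PAC.eq_mPt_of_le hle, PAC.coheight_mPt] at hch
          have : (d - t.card : ℕ) = 0 := by exact_mod_cast hch.symm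
          omega
      · intro I hI hne _
        rcases Finset.mem_insert.mp hI with rfl | hI
        · exact absurd rfl hne
        · obtain ⟨P, _, rfl⟩ := Finset.mem_image.mp hI
          exact P.isPrime
    rw [Set.not_subset] at havoid
    obtain ⟨y, hym, hynot⟩ := havoid
    have hyB : y ∉ B := fun hyB => hynot (Set.mem_biUnion (Finset.mem_coe.mpr (Finset.mem_insert_self _ _)) hyB)
    have hyBad : ∀ P ∈ Bad, y ∉ P.asIdeal := by
      intro P hP hyP
      refine hynot (Set.mem_biUnion ?_ hyP)
      exact Finset.mem_coe.mpr (Finset.mem_insert_of_mem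
        (Finset.mem_image_of_mem _ (hBadFin.mem_toFinset.mpr hP)))
    refine ⟨Fin.snoc x ⟨y, hym⟩, ?_, ?_⟩
    ·
      have hcomp : (fun i => (maximalIdeal A).toCotangent ((Fin.snoc x ⟨y, hym⟩ : Fin (n+1) → _) i))
          = Fin.snoc (fun i => (maximalIdeal A).toCotangent (x i))
            ((maximalIdeal A).toCotangent ⟨y, hym⟩) := by
        have := Fin.comp_snoc ((maximalIdeal A).toCotangent) x ⟨y, hym⟩
        exact this
      rw [hcomp, linearIndependent_fin_snoc]
      refine ⟨hind, ?_⟩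
      intro hmem
      apply hyB
      have h1 : (Submodule.span (ResidueField A)
            (Set.range fun i => (maximalIdeal A).toCotangent (x i))).restrictScalars A
          = Submodule.span A (Set.range fun i => (maximalIdeal A).toCotangent (x i)) :=
        Submodule.restrictScalars_span A (ResidueField A) Ideal.Quotient.mk_surjective _
      have hmem2 : (maximalIdeal A).toCotangent ⟨y, hym⟩ ∈
          Submodule.span A (Set.range fun i => (maximalIdeal A).toCotangent (x i)) := by
        rw [← h1]; exact hmem
      rw [show (Set.range fun i => (maximalIdeal A).toCotangent (x i))
          = (maximalIdeal A).toCotangent '' (Set.range x) from (Set.range_comp _ _),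
        ← Submodule.map_span] at hmem2
      obtain ⟨z, hz, hzy⟩ := hmem2
      have hker : ((⟨y, hym⟩ - z : maximalIdeal A) : A) ∈ maximalIdeal A ^ 2 := by
        rw [← Ideal.mem_toCotangent_ker]
        simp [LinearMap.mem_ker, map_sub, hzy]
      have hzmem : (z : A) ∈ Ideal.span (Set.range (fun i => (x i : A))) := by
        have : (z : A) ∈ Submodule.map (maximalIdeal A).subtype (Submodule.span A (Set.range x)) :=
          ⟨z, hz, rfl⟩
        rw [Submodule.map_span] at this
        rw [← Ideal.submodule_span_eq]
        convert this using 2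
        rw [← Set.range_comp]; rfl
      have hy2 : y - (z : A) ∈ maximalIdeal A • maximalIdeal A := by
        rw [smul_eq_mul, ← pow_two]
        simpa using hker
      have : y = (z : A) + (y - (z : A)) := by ring
      rw [this]
      exact Submodule.add_mem _ (Submodule.mem_sup_left hzmem) (Submodule.mem_sup_right hy2)
    ·
      intro t P htc hsp
      set t' : Finset (Fin n) := Finset.univ.filter (fun j => j.castSucc ∈ t) with ht'
      have himg : (Fin.snoc x ⟨y, hym⟩ : Fin (n+1) → _) '' (Fin.castSucc '' (t' : Set (Fin n)))
          = x '' (t' : Set (Fin n)) := by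
        rw [Set.image_image]; simp [Fin.snoc_castSucc]
      by_cases hlast : Fin.last n ∈ t
      · have hfeq : t = insert (Fin.last n) (t'.image Fin.castSucc) := by
          ext i
          simp only [Finset.mem_insert, Finset.mem_image, ht', Finset.mem_filter, Finset.mem_univ,
            true_and]
          constructor
          · intro hi
            by_cases hil : i = Fin.last n
            · exact Or.inl hil
            · obtain ⟨j, rfl⟩ := Fin.exists_castSucc_eq.mpr hil
              exact Or.inr ⟨j, hi, rfl⟩
          · rintro (rfl | ⟨j, hj, rfl⟩)
            · exact hlast
            · exact hj
        have hnotmem : Fin.last n ∉ t'.image Fin.castSucc := by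
          simp only [Finset.mem_image]
          rintro ⟨j, -, hj⟩
          exact absurd hj (Fin.castSucc_lt_last j).ne
        have hcard : t.card = t'.card + 1 := by
          rw [hfeq, Finset.card_insert_of_notMem hnotmem,
            Finset.card_image_of_injective _ (Fin.castSucc_injective n)]
        have ht'd : t'.card < d := by omega
        have hyP : y ∈ P.asIdeal := by
          apply hsp
          apply Ideal.subset_span
          have hmem := Set.mem_image_of_mem (Subtype.val)
            (Set.mem_image_of_mem (Fin.snoc x ⟨y, hym⟩ : Fin (n+1) → ↥(maximalIdeal A))
              (Finset.mem_coe.mpr hlast))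
          simpa [Fin.snoc_last] using hmem
        have hsp' : Ideal.span (Subtype.val '' (x '' (t' : Set (Fin n)))) ≤ P.asIdeal := by
          refine le_trans (Ideal.span_mono ?_) hsp
          rw [← himg]
          apply Set.image_mono
          apply Set.image_mono
          rw [hfeq, Finset.coe_insert, Finset.coe_image]
          exact Set.subset_insert _ _
        obtain ⟨Q, hQmin, hQP⟩ := Ideal.exists_minimalPrimes_le (J := P.asIdeal) hsp'
        have hQprime : Q.IsPrime := hQmin.1.1
        have hQle : (⟨Q, hQprime⟩ : PrimeSpectrum A) ≤ P :=
          (PrimeSpectrum.asIdeal_le_asIdeal _ _).mp hQP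
        have hQch : Order.coheight (⟨Q, hQprime⟩ : PrimeSpectrum A) ≤ ((d - t'.card : ℕ) : ℕ∞) :=
          hP1 t' _ (le_of_lt ht'd) hQmin.1.2
        have hlt : Order.coheight P < ((d - t'.card : ℕ) : ℕ∞) := by
          rcases eq_or_lt_of_le hQle with heq | hlt2
          · have hne : Order.coheight P ≠ ((d - t'.card : ℕ) : ℕ∞) := by
              intro hch
              refine hyBad P ⟨t', ht'd, ?_, hch⟩ hyP
              rw [show P.asIdeal = Q from congrArg PrimeSpectrum.asIdeal heq.symm]
              exact hQmin
            exact lt_of_le_of_ne (heq ▸ hQch) hne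
          · have hPfin : Order.coheight P < ⊤ :=
              lt_of_le_of_lt (le_trans (Order.coheight_anti (le_of_lt hlt2)) hQch)
                (WithTop.coe_lt_top _)
            exact lt_of_lt_of_le (Order.coheight_strictAnti hlt2 hPfin) hQch
        have harith : (d - t'.card : ℕ) = (d - t.card) + 1 := by omega
        rw [harith, Nat.cast_add, Nat.cast_one] at hlt
        exact (ENat.lt_add_one_iff (WithTop.coe_ne_top)).mp hlt
      · have hfeq : t = t'.image Fin.castSucc := by
          ext i
          simp only [Finset.mem_image, ht', Finset.mem_filter, Finset.mem_univ, true_and]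
          constructor
          · intro hi
            obtain ⟨j, rfl⟩ := Fin.exists_castSucc_eq.mpr (fun hh => hlast (hh ▸ hi))
            exact ⟨j, hi, rfl⟩
          · rintro ⟨j, hj, rfl⟩
            exact hj
        have hcard : t.card = t'.card := by
          rw [hfeq, Finset.card_image_of_injective _ (Fin.castSucc_injective n)]
        rw [hcard]
        apply hP1 t' P (by omega)
        have : Subtype.val '' (x '' (t' : Set (Fin n)))
            = Subtype.val '' ((Fin.snoc x ⟨y, hym⟩ : Fin (n+1) → _) '' (t : Set (Fin (n+1)))) := by
          rw [hfeq, Finset.coe_image, himg]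
        rw [this]
        exact hsp
end Aux

/-- In a `d`-dimensional Noetherian local ring whose maximal ideal is minimally generated
by `d + h` elements, one can choose generators `x₁, …, x_{d+h}` of the maximal ideal such
that any `d` of them form a system of parameters. -/
theorem prime_avoidance_choice_of_generators
    (A : Type*) [CommRing A] [IsLocalRing A] [IsNoetherianRing A]
    (d h : ℕ) (hdim : ringKrullDim A = d)
    (hgen : ∃ s : Finset A, s.card = d + h ∧ Ideal.span (s : Set A) = maximalIdeal A)
    (hmin : ∀ s : Finset A, Ideal.span (s : Set A) = maximalIdeal A → d + h ≤ s.card) :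
    ∃ x : Fin (d + h) → A, Ideal.span (Set.range x) = maximalIdeal A ∧
      ∀ t : Finset (Fin (d + h)), t.card = d →
        (Ideal.span (x '' (t : Set (Fin (d + h))))).radical = maximalIdeal A := by
  classical
  obtain ⟨x, hind, hP1⟩ := PAC.key d h hdim hmin (d + h) le_rfl
  refine ⟨fun i => (x i : A), ?_, ?_⟩
  · -- the generators span the maximal ideal
    obtain ⟨s, hscard, hsspan⟩ := hgen
    have hs_sub : (↑s : Set A) ⊆ maximalIdeal A := hsspan ▸ Ideal.subset_span
    set s' : Set ↥(maximalIdeal A) := Subtype.val ⁻¹' ↑s with hs'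
    have hvs' : Subtype.val '' s' = ↑s := by
      apply Set.image_preimage_eq_of_subset
      intro a ha
      exact ⟨⟨a, hs_sub ha⟩, rfl⟩
    have hs'span : Submodule.span A s' = ⊤ := by
      apply Submodule.map_injective_of_injective (Submodule.injective_subtype (maximalIdeal A))
      rw [Submodule.map_span, Submodule.map_top, Submodule.range_subtype]
      show Submodule.span A (Subtype.val '' s') = _
      rw [hvs', Ideal.submodule_span_eq, hsspan]
    have hsp_top : Submodule.span (ResidueField A)
        ((maximalIdeal A).toCotangent '' s') = ⊤ :=
      (CotangentSpace.span_image_eq_top_iff (s := s')).mpr hs'span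
    -- finrank ≤ d + h
    have hfr_le : Module.finrank (ResidueField A) (CotangentSpace A) ≤ d + h := by
      set u : Finset (CotangentSpace A) :=
        s.attach.image (fun a => (maximalIdeal A).toCotangent ⟨a.1, hs_sub a.2⟩) with hu
      have hucoe : (↑u : Set (CotangentSpace A)) = (maximalIdeal A).toCotangent '' s' := by
        ext c
        simp only [hu, Finset.coe_image, Set.mem_image, Finset.mem_coe, Finset.mem_attach,
          Set.mem_preimage, hs']
        constructor
        · rintro ⟨⟨a, ha⟩, -, rfl⟩
          exact ⟨⟨a, hs_sub ha⟩, by simpa using ha, rfl⟩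
        · rintro ⟨⟨a, ham⟩, ha, rfl⟩
          refine ⟨⟨a, by simpa using ha⟩, by simp, rfl⟩
      have h1 : Module.finrank (ResidueField A)
          (Submodule.span (ResidueField A) (↑u : Set (CotangentSpace A))) ≤ u.card :=
        finrank_span_finset_le_card u
      rw [hucoe, hsp_top] at h1
      rw [finrank_top] at h1
      calc Module.finrank (ResidueField A) (CotangentSpace A) ≤ u.card := h1
        _ ≤ s.attach.card := Finset.card_image_le
        _ = d + h := by rw [Finset.card_attach, hscard]
    have hfr_ge : d + h ≤ Module.finrank (ResidueField A) (CotangentSpace A) := by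
      have := hind.fintype_card_le_finrank
      simpa using this
    have hspan_top : Submodule.span (ResidueField A)
        (Set.range (fun i => (maximalIdeal A).toCotangent (x i))) = ⊤ :=
      hind.span_eq_top_of_card_eq_finrank' (by rw [Fintype.card_fin]; exact le_antisymm hfr_ge hfr_le)
    have hxspan : Submodule.span A (Set.range x) = ⊤ := by
      rw [← CotangentSpace.span_image_eq_top_iff (s := Set.range x), ← Set.range_comp]
      exact hspan_top
    -- push down to A
    rw [← Ideal.submodule_span_eq, show Set.range (fun i => (x i : A))
      = Subtype.val '' Set.range x from (Set.range_comp _ _)]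
    show Submodule.span A (⇑(Submodule.subtype (maximalIdeal A)) '' Set.range x) = maximalIdeal A
    rw [← Submodule.map_span, hxspan, Submodule.map_top, Submodule.range_subtype]
  · intro t htc
    have hMprime : (maximalIdeal A).IsPrime := (maximalIdeal.isMaximal A).isPrime
    have himg : (fun i => (x i : A)) '' (t : Set (Fin (d + h)))
        = Subtype.val '' (x '' (t : Set (Fin (d + h)))) := by
      rw [Set.image_image]
    have hsub : Ideal.span ((fun i => (x i : A)) '' (t : Set (Fin (d + h)))) ≤ maximalIdeal A := by
      apply Ideal.span_le.mpr
      rintro a ⟨i, -, rfl⟩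
      exact (x i).2
    rw [Ideal.radical_eq_sInf]
    apply le_antisymm
    · exact sInf_le ⟨hsub, hMprime⟩
    · apply le_sInf
      rintro J ⟨hJle, hJprime⟩
      have hch := hP1 t ⟨J, hJprime⟩ (le_of_eq htc) (by rw [← himg]; exact hJle)
      rw [htc, Nat.sub_self, Nat.cast_zero, nonpos_iff_eq_zero] at hch
      have hmax := Order.coheight_eq_zero.mp hch
      have : (⟨J, hJprime⟩ : PrimeSpectrum A) = PAC.mPt A :=
        le_antisymm (PAC.le_mPt _) (hmax (PAC.le_mPt _))
      exact le_of_eq (congrArg PrimeSpectrum.asIdeal this).symm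
end

section
/- Let (A, m) be a Noetherian local ring of dimension d ≥ 1, let x₁, x_j ∈ m, and let P be a prime ideal of A with x₁ ∉ P. Then for all but at most one natural number n, x_j − x₁^n ∉ P. Consequently, if x₂,...,x_{j-1}, x_{j+1},...,x_{d+1} is part of a generating set such that any d of x₁,...,x_{d+1} form a system of parameters, then for all sufficiently large n, any d elements chosen from {x₁,...,x_{j-1}, x_j − x₁^n, x_{j+1},...,x_{d+1}} form a system of parameters of A. -/
open IsLocalRing

private lemma sop_aux_two_n (A : Type*) [CommRing A] [IsLocalRing A]
    (x1 xj : A) (hx1m : x1 ∈ maximalIdeal A)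
    (P : Ideal A) (hP : P.IsPrime) (hx1P : x1 ∉ P)
    {a b : ℕ} (hab : a < b) (ha : xj - x1 ^ a ∈ P) (hb : xj - x1 ^ b ∈ P) : False := by
  have hpow : x1 ^ a * (1 - x1 ^ (b - a)) = (xj - x1 ^ b) - (xj - x1 ^ a) := by
    rw [mul_sub, mul_one, ← pow_add, Nat.add_sub_cancel' hab.le]; ring
  have hmem : x1 ^ a * (1 - x1 ^ (b - a)) ∈ P := hpow ▸ P.sub_mem hb ha
  rcases hP.mem_or_mem hmem with h | h
  · exact hx1P (hP.mem_of_pow_mem _ h)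
  · have hzm : x1 ^ (b - a) ∈ maximalIdeal A :=
      Ideal.pow_mem_of_mem _ hx1m _ (Nat.sub_pos_of_lt hab)
    have hu : IsUnit (1 - x1 ^ (b - a)) :=
      IsLocalRing.isUnit_one_sub_self_of_mem_nonunits _ hzm
    exact hP.ne_top (P.eq_top_of_isUnit_mem h hu)

/-- In a Noetherian local ring of dimension `d ≥ 1`: if `x₁ ∉ P` for a prime `P` and
`x₁` is in the maximal ideal, then `x_j - x₁^n ∈ P` for at most one `n`. Consequently,
replacing `x_j` by `x_j - x₁^n` (indexing `x₁` by `0`) for `n` large preserves the property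
that any `d` of the `d+1` elements form a system of parameters. -/
theorem sop_stable_under_substitution
    (A : Type*) [CommRing A] [IsLocalRing A] [IsNoetherianRing A]
    (d : ℕ) (hd : 1 ≤ d) (hdim : ringKrullDim A = d)
    (x1 xj : A) (hx1m : x1 ∈ maximalIdeal A) (hxjm : xj ∈ maximalIdeal A)
    (P : Ideal A) (hP : P.IsPrime) (hx1P : x1 ∉ P)
    (x : Fin (d + 1) → A) (hx : ∀ i, x i ∈ maximalIdeal A) (j : Fin (d + 1)) (hj : j ≠ 0)
    (hsop : ∀ t : Finset (Fin (d + 1)), t.card = d →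
      (Ideal.span (x '' (t : Set (Fin (d + 1))))).radical = maximalIdeal A) :
    {n : ℕ | xj - x1 ^ n ∈ P}.Subsingleton ∧
    ∃ N : ℕ, ∀ n ≥ N, ∀ t : Finset (Fin (d + 1)), t.card = d →
      (Ideal.span ((fun i => if i = j then x j - x 0 ^ n else x i) ''
        (t : Set (Fin (d + 1))))).radical = maximalIdeal A := by
  constructor
  · intro a ha b hb
    rcases lt_trichotomy a b with h | h | h
    · exact absurd (sop_aux_two_n A x1 xj hx1m P hP hx1P h ha hb) id
    · exact h
    · exact absurd (sop_aux_two_n A x1 xj hx1m P hP hx1P h hb ha) id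
  · -- choose a uniform exponent
    have key : ∀ t : Finset (Fin (d + 1)), ∃ a : ℕ, t.card = d →
        x 0 ^ a ∈ Ideal.span (x '' (t : Set (Fin (d + 1)))) := by
      intro t
      by_cases ht : t.card = d
      · have : x 0 ∈ (Ideal.span (x '' (t : Set (Fin (d + 1))))).radical := by
          rw [hsop t ht]; exact hx 0
        obtain ⟨a, ha⟩ := Ideal.mem_radical_iff.mp this
        exact ⟨a, fun _ => ha⟩
      · exact ⟨0, fun h => absurd h ht⟩
    choose g hg using key
    set N0 : ℕ := Finset.univ.sup g with hN0def
    have hN0 : ∀ t : Finset (Fin (d + 1)), t.card = d →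
        x 0 ^ N0 ∈ Ideal.span (x '' (t : Set (Fin (d + 1)))) := by
      intro t ht
      have hle : g t ≤ N0 := Finset.le_sup (Finset.mem_univ t)
      have h1 : x 0 ^ N0 = x 0 ^ (N0 - g t) * x 0 ^ g t := by
        rw [← pow_add, Nat.sub_add_cancel hle]
      rw [h1]
      exact Ideal.mul_mem_left _ _ (hg t ht)
    refine ⟨N0 + 1, ?_⟩
    intro n hn t ht
    have hn0 : 0 < n := lt_of_lt_of_le (Nat.succ_pos N0) hn
    by_cases hjt : j ∈ t
    · -- j ∈ t : the substituted case
      have hjt' : j ∈ (t : Set (Fin (d + 1))) := Finset.mem_coe.mpr hjt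
      apply le_antisymm
      · -- radical ≤ m
        have h1 : Ideal.span ((fun i => if i = j then x j - x 0 ^ n else x i) ''
            (t : Set (Fin (d + 1)))) ≤ maximalIdeal A := by
          rw [Ideal.span_le]
          rintro _ ⟨i, hi, rfl⟩
          by_cases hij : i = j
          · simp only [hij, if_pos rfl]
            exact sub_mem (hx j) (Ideal.pow_mem_of_mem _ (hx 0) _ hn0)
          · simp only [if_neg hij]; exact hx i
        calc (Ideal.span _).radical ≤ (maximalIdeal A).radical := Ideal.radical_mono h1
          _ = maximalIdeal A := (IsLocalRing.maximalIdeal.isMaximal A).isPrime.radical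
      · -- m ≤ radical
        rw [Ideal.radical_eq_sInf]
        refine le_sInf ?_
        rintro Q ⟨hle, hQ⟩
        have hyQ : x j - x 0 ^ n ∈ Q :=
          hle (Ideal.subset_span ⟨j, hjt', if_pos rfl⟩)
        have hxQ : ∀ i ∈ t, i ≠ j → x i ∈ Q := fun i hi hij =>
          hle (Ideal.subset_span ⟨i, Finset.mem_coe.mpr hi, if_neg hij⟩)
        have hx0Q : x 0 ∈ Q := by
          by_contra hx0
          have hsub : Ideal.span (x '' (t : Set (Fin (d + 1)))) ≤
              Q ⊔ Ideal.span {x 0 ^ n} := by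
            rw [Ideal.span_le]
            rintro _ ⟨i, hi, rfl⟩
            by_cases hij : i = j
            · subst hij
              have h2 : x i = (x i - x 0 ^ n) + x 0 ^ n := by ring
              rw [h2]
              exact Submodule.add_mem _ (Ideal.mem_sup_left hyQ)
                (Ideal.mem_sup_right (Ideal.subset_span rfl))
            · exact Ideal.mem_sup_left (hxQ i (Finset.mem_coe.mp hi) hij)
          have hmem := hsub (hN0 t ht)
          rw [Submodule.mem_sup] at hmem
          obtain ⟨p, hp, z, hz, hpz⟩ := hmem
          rw [Ideal.mem_span_singleton'] at hz
          obtain ⟨r, rfl⟩ := hz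
          have hNn : N0 ≤ n := le_trans (Nat.le_succ N0) hn
          have hfac : x 0 ^ N0 * (1 - r * x 0 ^ (n - N0)) = p := by
            have : x 0 ^ N0 * x 0 ^ (n - N0) = x 0 ^ n := by
              rw [← pow_add, Nat.add_sub_cancel' hNn]
            calc x 0 ^ N0 * (1 - r * x 0 ^ (n - N0))
                = x 0 ^ N0 - r * (x 0 ^ N0 * x 0 ^ (n - N0)) := by ring
              _ = x 0 ^ N0 - r * x 0 ^ n := by rw [this]
              _ = p := by rw [← hpz]; ring
          have hmemQ : x 0 ^ N0 * (1 - r * x 0 ^ (n - N0)) ∈ Q := hfac ▸ hp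
          rcases hQ.mem_or_mem hmemQ with h | h
          · exact hx0 (hQ.mem_of_pow_mem _ h)
          · have hzm : r * x 0 ^ (n - N0) ∈ maximalIdeal A :=
              Ideal.mul_mem_left _ _
                (Ideal.pow_mem_of_mem _ (hx 0) _ (Nat.sub_pos_of_lt (Nat.lt_of_succ_le hn)))
            have hu : IsUnit (1 - r * x 0 ^ (n - N0)) :=
              IsLocalRing.isUnit_one_sub_self_of_mem_nonunits _ hzm
            exact hQ.ne_top (Q.eq_top_of_isUnit_mem h hu)
        have hxjQ : x j ∈ Q := by
          have h2 : x j = (x j - x 0 ^ n) + x 0 ^ n := by ring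
          rw [h2]
          exact Q.add_mem hyQ (Ideal.pow_mem_of_mem _ hx0Q _ hn0)
        have hspan : Ideal.span (x '' (t : Set (Fin (d + 1)))) ≤ Q := by
          rw [Ideal.span_le]
          rintro _ ⟨i, hi, rfl⟩
          by_cases hij : i = j
          · subst hij; exact hxjQ
          · exact hxQ i (Finset.mem_coe.mp hi) hij
        calc maximalIdeal A = (Ideal.span (x '' (t : Set (Fin (d + 1))))).radical :=
              (hsop t ht).symm
          _ ≤ Q.radical := Ideal.radical_mono hspan
          _ = Q := hQ.radical
    · -- j ∉ t : the image is unchanged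
      have himg : (fun i => if i = j then x j - x 0 ^ n else x i) ''
          (t : Set (Fin (d + 1))) = x '' (t : Set (Fin (d + 1))) :=
        Set.image_congr fun i hi => if_neg (by rintro rfl; exact hjt (Finset.mem_coe.mp hi))
      rw [himg]
      exact hsop t ht
end

section
/- Let k be a field of characteristic p > 0 and let F = Σ_{a,b} F_{a,b} Y₁^a Y_j^b with coefficients F_{a,b} in a commutative ring, such that F_{a,b} = 0 whenever p ∤ a. Suppose there exist a, b with p ∤ b and F_{a,b} ≠ 0; let b₀ = min{b : p ∤ b and F_{a,b} ≠ 0 for some a} and a₀ = min{a : F_{a,b₀} ≠ 0}. Let n > a₀ with n ≡ 1 mod p, and define G_{a,b} by Σ F_{a,b} Y₁^a (Y_j + Y₁^n)^b = Σ G_{a,b} Y₁^a Y_j^b. Then G_{a₀+n, b₀−1} = b₀ · F_{a₀,b₀} ≠ 0. -/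
/-- The key coefficient computation: substituting `Y_j ↦ Y_j + Y₁^n` in
`Σ F_{a,b} Y₁^a Y_j^b` (with `F_{a,b} = 0` whenever `p ∤ a`) produces a series
`Σ G_{a,b} Y₁^a Y_j^b` with `G_{a₀+n, b₀-1} = b₀ • F_{a₀,b₀} ≠ 0`, where
`G a b = Σ_t C(b+t, t) • F (a - n t) (b + t)` (sum over `t` with `n t ≤ a`). -/
theorem coefficient_after_substitution
    (p : ℕ) (hp : p.Prime) (k : Type*) [Field k] [CharP k p]
    (R : Type*) [CommRing R] [Algebra k R]
    (F : ℕ → ℕ → R) (hdvd : ∀ a b : ℕ, ¬ p ∣ a → F a b = 0)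
    (b₀ a₀ n : ℕ)
    (hb₀ : IsLeast {b : ℕ | ¬ p ∣ b ∧ ∃ a, F a b ≠ 0} b₀)
    (ha₀ : IsLeast {a : ℕ | F a b₀ ≠ 0} a₀)
    (hn : a₀ < n) (hnp : n % p = 1)
    (G : ℕ → ℕ → R)
    (hG : ∀ a b : ℕ, G a b =
      ∑ t ∈ Finset.range (a + 1),
        if n * t ≤ a then ((b + t).choose t) • F (a - n * t) (b + t) else 0) :
    G (a₀ + n) (b₀ - 1) = b₀ • F a₀ b₀ ∧ G (a₀ + n) (b₀ - 1) ≠ 0 := by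
  have hF : F a₀ b₀ ≠ 0 := ha₀.1
  have hb0pos : 0 < b₀ := by
    rcases Nat.eq_zero_or_pos b₀ with h | h
    · exact absurd (h ▸ hb₀.1.1) (by simp)
    · exact h
  have hb1 : b₀ - 1 + 1 = b₀ := Nat.succ_pred_eq_of_pos hb0pos
  have hpa₀ : p ∣ a₀ := by
    by_contra h
    exact hF (hdvd _ _ h)
  have hpn : ¬ p ∣ n := by
    intro h
    rw [Nat.dvd_iff_mod_eq_zero] at h
    omega
  have hFz : F (a₀ + n) (b₀ - 1) = 0 := by
    apply hdvd
    intro h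
    exact hpn ((Nat.dvd_add_right hpa₀).mp h)
  have hnpos : 0 < n := lt_of_le_of_lt (Nat.zero_le _) hn
  have hval : G (a₀ + n) (b₀ - 1) = b₀ • F a₀ b₀ := by
    rw [hG]
    rw [Finset.sum_eq_single_of_mem 1 (by simp [Finset.mem_range]; omega)]
    · simp only [mul_one, hb1, Nat.choose_one_right, Nat.add_sub_cancel,
        mul_one]
      rw [if_pos (by omega : n ≤ a₀ + n)]
    · intro t _ ht
      rcases Nat.lt_or_ge t 2 with h2 | h2
      · interval_cases t
        · simp [hFz]
        · exact absurd rfl ht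
      · have : ¬ n * t ≤ a₀ + n := by nlinarith
        simp [this]
  refine ⟨hval, ?_⟩
  rw [hval]
  intro hzero
  have hntriv : Nontrivial R := ⟨F a₀ b₀, 0, hF⟩
  have hbk : (b₀ : k) ≠ 0 := by
    intro h
    exact hb₀.1.1 ((CharP.cast_eq_zero_iff k p b₀).mp h)
  have : (b₀ : R) * F a₀ b₀ = 0 := by rw [← nsmul_eq_mul]; exact hzero
  have hcast : (b₀ : R) = algebraMap k R (b₀ : k) := by
    simp [map_natCast]
  apply hF
  have := congrArg (fun x => algebraMap k R (b₀ : k)⁻¹ * x) this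
  simp only [mul_zero] at this
  rw [hcast, ← mul_assoc, ← map_mul, inv_mul_cancel₀ hbk, map_one, one_mul] at this
  exact this
end

section
/- Let k be a field of characteristic p > 0, let R = k[[Y₁,...,Y_{d+1}]], and let f ∈ R with ∂f/∂Y₁ = 0. Suppose f has a nonzero coefficient on a monomial Y₁^{a₀}Y_j^{b₀} (times a monomial in the other variables) with p ∤ b₀, chosen as in the minimality conditions of Step 1. Then for suitable n ≡ 1 mod p with n > a₀, the power series g(Y₁,...,Y_{d+1}) := f(Y₁,...,Y_{j-1}, Y_j + Y₁^n, Y_{j+1},...,Y_{d+1}) satisfies ∂g/∂Y₁ ≠ 0. -/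
/-- The formal partial derivative of a multivariate power series with respect to
the variable `j`. -/
noncomputable def MvPowerSeries.pderiv' {σ R : Type*} [CommSemiring R]
    (j : σ) (f : MvPowerSeries σ R) : MvPowerSeries σ R :=
  fun m => (m j + 1) • f (m + Finsupp.single j 1)

/-- The result of substituting `Y_j ↦ Y_j + Y₁^n` (`Y₁` being the variable of index `0`)
in a multivariate power series. -/
noncomputable def MvPowerSeries.substAddPow {k : Type*} [CommRing k] {d : ℕ}
    (j : Fin (d + 1)) (n : ℕ) (f : MvPowerSeries (Fin (d + 1)) k) :
    MvPowerSeries (Fin (d + 1)) k :=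
  fun μ => ∑ t ∈ Finset.range (μ 0 + 1),
    if n * t ≤ μ 0 then
      ((μ j + t).choose t) • f (μ + Finsupp.single j t - Finsupp.single (0 : Fin (d + 1)) (n * t))
    else 0

/-- Step 1 of Claim 3.2: if `∂f/∂Y₁ = 0` but `f` has a nonzero coefficient on a monomial
`Y₁^{a₀} Y_j^{b₀}` with `p ∤ b₀` (chosen minimally), then for suitable `n ≡ 1 mod p` with
`n > a₀`, the substitution `Y_j ↦ Y_j + Y₁^n` produces `g` with `∂g/∂Y₁ ≠ 0`. -/
theorem pderiv_ne_zero_after_substitution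
    (p : ℕ) (hp : p.Prime) (k : Type*) [Field k] [CharP k p] (d : ℕ) (hd : 0 < d)
    (f : MvPowerSeries (Fin (d + 1)) k) (j : Fin (d + 1)) (hj : j ≠ 0)
    (hder : MvPowerSeries.pderiv' (0 : Fin (d + 1)) f = 0)
    (b₀ a₀ : ℕ)
    (hb₀ : IsLeast {b : ℕ | ¬ p ∣ b ∧
      ∃ μ : Fin (d + 1) →₀ ℕ, μ j = b ∧ MvPowerSeries.coeff μ f ≠ 0} b₀)
    (ha₀ : IsLeast {a : ℕ | ∃ μ : Fin (d + 1) →₀ ℕ,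
      μ (0 : Fin (d + 1)) = a ∧ μ j = b₀ ∧ MvPowerSeries.coeff μ f ≠ 0} a₀) :
    ∃ n : ℕ, n % p = 1 ∧ a₀ < n ∧
      MvPowerSeries.pderiv' (0 : Fin (d + 1)) (MvPowerSeries.substAddPow j n f) ≠ 0 := by
  classical
  obtain ⟨⟨hpb, -⟩, -⟩ := hb₀
  obtain ⟨⟨μs, hs0, hsj, hsne⟩, -⟩ := ha₀
  have hsne' : f μs ≠ 0 := hsne
  have hb1 : 1 ≤ b₀ := by
    rcases Nat.eq_zero_or_pos b₀ with h | h
    · exact absurd (h ▸ dvd_zero p) hpb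
    · exact h
  set n := p * a₀ + 1 with hn
  -- pointwise derivative condition
  have hder' : ∀ m : Fin (d+1) →₀ ℕ,
      (m 0 + 1) • f (m + Finsupp.single (0 : Fin (d+1)) 1) = 0 := by
    intro m
    exact congrFun hder m
  have hkey : ∀ ν : Fin (d+1) →₀ ℕ, ((ν 0 : k)) * f ν = 0 := by
    intro ν
    rcases Nat.eq_zero_or_pos (ν 0) with h | h
    · simp [h]
    · have hle : Finsupp.single (0 : Fin (d+1)) 1 ≤ ν := by
        rw [Finsupp.single_le_iff]; exact h
      have hν : ν - Finsupp.single (0 : Fin (d+1)) 1 + Finsupp.single (0 : Fin (d+1)) 1 = ν :=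
        tsub_add_cancel_of_le hle
      have h2 := hder' (ν - Finsupp.single (0 : Fin (d+1)) 1)
      rw [hν] at h2
      simp only [Finsupp.tsub_apply, Finsupp.single_apply, eq_self_iff_true, if_true] at h2
      rw [Nat.sub_add_cancel h, nsmul_eq_mul] at h2
      exact h2
  have hA : (a₀ : k) = 0 := by
    have := hkey μs
    rw [hs0] at this
    exact (mul_eq_zero.mp this).resolve_right hsne'
  have hNk : ((a₀ + n : ℕ) : k) = 1 := by
    push_cast [hn]
    rw [CharP.cast_eq_zero k p, hA]
    ring
  refine ⟨n, ?_, ?_, ?_⟩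
  · rw [hn, Nat.mul_add_mod, Nat.mod_eq_of_lt hp.one_lt]
  · exact Nat.lt_succ_of_le (Nat.le_mul_of_pos_left _ hp.pos)
  · -- main part
    set σ := μs - Finsupp.single j 1 with hσdef
    have hσs : σ + Finsupp.single j 1 = μs := by
      apply tsub_add_cancel_of_le
      rw [Finsupp.single_le_iff, hsj]; exact hb1
    have hσ0 : σ 0 = a₀ := by
      rw [hσdef, Finsupp.tsub_apply, Finsupp.single_apply, if_neg hj, hs0]; omega
    have hσj : σ j = b₀ - 1 := by
      rw [hσdef, Finsupp.tsub_apply, Finsupp.single_apply, if_pos rfl, hsj]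
    set μ := σ + Finsupp.single (0 : Fin (d+1)) n with hμdef
    have hμ0 : μ 0 = a₀ + n := by
      rw [hμdef, Finsupp.add_apply, Finsupp.single_apply, if_pos rfl, hσ0]
    have hμj : μ j = b₀ - 1 := by
      rw [hμdef, Finsupp.add_apply, Finsupp.single_apply, if_neg (Ne.symm hj), hσj, add_zero]
    set m := σ + Finsupp.single (0 : Fin (d+1)) (p * a₀) with hmdef
    have hm0 : m 0 = a₀ + p * a₀ := by
      rw [hmdef, Finsupp.add_apply, Finsupp.single_apply, if_pos rfl, hσ0]
    have hmμ : m + Finsupp.single (0 : Fin (d+1)) 1 = μ := by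
      rw [hmdef, hμdef, add_assoc, ← Finsupp.single_add]
    have hfμ : f μ = 0 := by
      have := hkey μ
      rw [hμ0, hNk, one_mul] at this
      exact this
    have hgμ : MvPowerSeries.substAddPow j n f μ = b₀ • f μs := by
      rw [MvPowerSeries.substAddPow]
      rw [Finset.sum_eq_single_of_mem 1]
      · rw [if_pos (by rw [mul_one, hμ0]; omega)]
        rw [hμj, Nat.choose_one_right]
        have harg : μ + Finsupp.single j 1 - Finsupp.single (0 : Fin (d+1)) (n * 1) = μs := by
          rw [mul_one, hμdef]
          rw [add_right_comm, hσs, add_tsub_cancel_right]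
        rw [harg]
        congr 1
        omega
      · rw [Finset.mem_range, hμ0]; omega
      · intro t ht hne
        match t, hne with
        | 0, _ =>
          rw [if_pos (by simp)]
          simp [hfμ]
        | (t+2), _ =>
          rw [if_neg]
          rw [hμ0]
          have : a₀ < n := Nat.lt_succ_of_le (Nat.le_mul_of_pos_left _ hp.pos)
          nlinarith
    intro hcon
    have hval := congrFun hcon m
    rw [MvPowerSeries.pderiv'] at hval
    rw [hmμ, hgμ, hm0] at hval
    rw [smul_smul, nsmul_eq_mul] at hval
    rw [show (0 : MvPowerSeries (Fin (d+1)) k) m = 0 from rfl] at hval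
    have hcast : (((a₀ + p * a₀ + 1) * b₀ : ℕ) : k) ≠ 0 := by
      push_cast
      rw [CharP.cast_eq_zero k p, hA]
      simp only [zero_mul, add_zero, zero_add, one_mul]
      exact fun h => hpb ((CharP.cast_eq_zero_iff k p b₀).mp h)
    exact hcast ((mul_eq_zero.mp hval).resolve_right hsne')
end

section
/- Let (A, m, k) be a complete Noetherian local ring of equal characteristic p > 0 with k perfect. Then A has a unique coefficient field. -/
open IsLocalRing

/-- A complete Noetherian local ring of equal characteristic `p > 0` with perfect residue
field has a unique coefficient field. -/
theorem unique_coefficient_field_of_perfect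
    (p : ℕ) (hp : p.Prime)
    (A : Type*) [CommRing A] [IsLocalRing A] [IsNoetherianRing A]
    [IsAdicComplete (maximalIdeal A) A] [CharP A p]
    [PerfectField (ResidueField A)] :
    ∃! φ : ResidueField A →+* A,
      (residue A).comp φ = RingHom.id (ResidueField A) := by
  haveI : Fact p.Prime := ⟨hp⟩
  set k := ResidueField A with hkdef
  set m := maximalIdeal A with hmdef
  -- characteristic of the residue field
  have hpk : (p : k) = 0 := by
    have h := congrArg (residue A) (CharP.cast_eq_zero A p)
    rw [map_natCast, map_zero] at h
    exact h
  haveI : CharP k p := by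
    have hdvd : ringChar k ∣ p := ringChar.dvd hpk
    rcases (Nat.Prime.eq_one_or_self_of_dvd hp _ hdvd) with h1 | h1
    · exact absurd h1 (CharP.ringChar_ne_one)
    · exact h1 ▸ ringChar.charP k
  haveI : ExpChar k p := .prime hp
  haveI : ExpChar A p := .prime hp
  -- a set-theoretic section of the residue map
  obtain ⟨s, hs⟩ : ∃ s : k → A, ∀ x, residue A (s x) = x :=
    ⟨Function.surjInv residue_surjective, Function.surjInv_eq _⟩
  -- inverse Frobenius iterates
  set E : ℕ → (k ≃+* k) := fun n => (iterateFrobeniusEquiv k p n).symm with hEdef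
  have hEpow : ∀ n x, (E n x) ^ p ^ n = x := by
    intro n x
    have := (iterateFrobeniusEquiv k p n).apply_symm_apply x
    rwa [iterateFrobeniusEquiv_def] at this
  have hinj : ∀ n (x y : k), x ^ p ^ n = y ^ p ^ n → x = y := by
    intro n x y h
    apply (iterateFrobeniusEquiv k p n).injective
    rwa [iterateFrobeniusEquiv_def, iterateFrobeniusEquiv_def]
  have hEstep : ∀ n x, (E (n + 1) x) ^ p = E n x := by
    intro n x
    apply hinj n
    rw [← pow_mul, ← pow_succ', hEpow, hEpow]
  -- the key congruence: equal residues give p^n-powers congruent mod m^n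
  have hkey : ∀ (a b : A), residue A a = residue A b →
      ∀ n, a ^ p ^ n - b ^ p ^ n ∈ m ^ n := by
    intro a b h n
    have hc : a - b ∈ m := Ideal.Quotient.eq.mp h
    have hab : a ^ p ^ n = b ^ p ^ n + (a - b) ^ p ^ n := by
      have h2 : a = b + (a - b) := by ring
      calc a ^ p ^ n = (b + (a - b)) ^ p ^ n := by rw [← h2]
        _ = b ^ p ^ n + (a - b) ^ p ^ n := add_pow_expChar_pow ..
    have hmem : (a - b) ^ p ^ n ∈ m ^ p ^ n := Ideal.pow_mem_pow hc _
    have hle : m ^ p ^ n ≤ m ^ n :=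
      Ideal.pow_le_pow_right (le_of_lt (Nat.lt_pow_self (n := n) hp.one_lt))
    rw [hab]
    simpa using hle hmem
  -- the approximating sequence
  set f : k → ℕ → A := fun x n => s (E n x) ^ p ^ n with hfdef
  have hclose : ∀ x n j, f x (n + j) - f x n ∈ m ^ n := by
    intro x n j
    induction j with
    | zero => simp
    | succ j ih =>
      have h1 : residue A (s (E (n + j + 1) x) ^ p) = residue A (s (E (n + j) x)) := by
        rw [map_pow, hs, hs, hEstep]
      have h2 := hkey _ _ h1 (n + j)
      have h3 : (s (E (n + j + 1) x) ^ p) ^ p ^ (n + j) = f x (n + j + 1) := by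
        rw [← pow_mul, ← pow_succ']
      rw [h3] at h2
      have h4 : f x (n + (j + 1)) - f x n
          = (f x (n + j + 1) - f x (n + j)) + (f x (n + j) - f x n) := by
        show f x (n + j + 1) - f x n = _
        ring
      rw [h4]
      exact add_mem (Ideal.pow_le_pow_right (Nat.le_add_right n j) h2) ih
  have hsmul : ∀ n : ℕ, (m ^ n • ⊤ : Submodule A A) = m ^ n := by
    intro n; rw [smul_eq_mul, Ideal.mul_top]
  -- take limits
  have hcau : ∀ x : k, ∀ {i j : ℕ}, i ≤ j →
      f x i ≡ f x j [SMOD (m ^ i • ⊤ : Submodule A A)] := by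
    intro x i j hij
    rw [SModEq.sub_mem, hsmul]
    obtain ⟨j', rfl⟩ := Nat.exists_eq_add_of_le hij
    have := hclose x i j'
    simpa using neg_mem this
  have hprec := (IsAdicComplete.toIsPrecomplete (I := m) (M := A))
  set φ₀ : k → A := fun x => Classical.choose (hprec.prec (hcau x)) with hφ₀def
  have hφ : ∀ x n, f x n - φ₀ x ∈ m ^ n := by
    intro x n
    have := Classical.choose_spec (hprec.prec (hcau x)) n
    rw [SModEq.sub_mem, hsmul] at this
    exact this
  -- separation
  have hsep : ∀ a b : A, (∀ n, a - b ∈ m ^ n) → a = b := by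
    intro a b h
    have := (IsAdicComplete.toIsHausdorff (I := m) (M := A)).haus (a - b)
      (fun n => by rw [SModEq.sub_mem, hsmul, sub_zero]; exact h n)
    exact sub_eq_zero.mp this
  -- residue of the limit
  have hres : ∀ x, residue A (φ₀ x) = x := by
    intro x
    have h1 := hφ x 1
    rw [pow_one] at h1
    have h2 : residue A (f x 1) = residue A (φ₀ x) := Ideal.Quotient.eq.mpr h1
    rw [← h2]
    show residue A (s (E 1 x) ^ p ^ 1) = x
    rw [map_pow, hs, hEpow]
  -- ring-hom properties of the limit
  have hone : φ₀ 1 = 1 := by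
    apply hsep; intro n
    have h1 : residue A (s (E n 1)) = residue A 1 := by rw [hs, map_one, map_one]
    have h2 := hkey _ _ h1 n
    rw [one_pow] at h2
    have h3 : φ₀ 1 - 1 = -(f 1 n - φ₀ 1) + (f 1 n - 1) := by ring
    rw [h3]
    exact add_mem (neg_mem (hφ 1 n)) h2
  have hzero : φ₀ 0 = 0 := by
    apply hsep; intro n
    have h1 : residue A (s (E n 0)) = residue A 0 := by rw [hs, map_zero, map_zero]
    have h2 := hkey _ _ h1 n
    rw [zero_pow (pow_ne_zero n hp.ne_zero)] at h2
    rw [sub_zero] at h2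
    have h3 : φ₀ 0 - 0 = -(f 0 n - φ₀ 0) + (f 0 n - 0) := by ring
    rw [h3]
    have h2' : f 0 n - 0 ∈ m ^ n := by rw [sub_zero]; exact h2
    exact add_mem (neg_mem (hφ 0 n)) h2' 
  have hadd : ∀ x y, φ₀ (x + y) = φ₀ x + φ₀ y := by
    intro x y
    apply hsep; intro n
    have h1 : residue A (s (E n (x + y))) = residue A (s (E n x) + s (E n y)) := by
      rw [hs, map_add, map_add, hs, hs]
    have h2 := hkey _ _ h1 n
    rw [add_pow_expChar_pow] at h2
    have h2' : f (x + y) n - (f x n + f y n) ∈ m ^ n := h2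
    have h3 : φ₀ (x + y) - (φ₀ x + φ₀ y)
        = -(f (x + y) n - φ₀ (x + y)) + (f (x + y) n - (f x n + f y n))
          + (f x n - φ₀ x) + (f y n - φ₀ y) := by ring
    rw [h3]
    exact add_mem (add_mem (add_mem (neg_mem (hφ _ n)) h2') (hφ x n)) (hφ y n)
  have hmul : ∀ x y, φ₀ (x * y) = φ₀ x * φ₀ y := by
    intro x y
    apply hsep; intro n
    have h1 : residue A (s (E n (x * y))) = residue A (s (E n x) * s (E n y)) := by
      rw [hs, map_mul, map_mul, hs, hs]
    have h2 := hkey _ _ h1 n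
    rw [mul_pow] at h2
    have h2' : f (x * y) n - f x n * f y n ∈ m ^ n := h2
    have h4 : f x n * f y n - φ₀ x * φ₀ y
        = f x n * (f y n - φ₀ y) + φ₀ y * (f x n - φ₀ x) := by ring
    have h5 : f x n * f y n - φ₀ x * φ₀ y ∈ m ^ n := by
      rw [h4]
      exact add_mem (Ideal.mul_mem_left _ _ (hφ y n)) (Ideal.mul_mem_left _ _ (hφ x n))
    have h3 : φ₀ (x * y) - φ₀ x * φ₀ y
        = -(f (x * y) n - φ₀ (x * y)) + (f (x * y) n - f x n * f y n)
          + (f x n * f y n - φ₀ x * φ₀ y) := by ring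
    rw [h3]
    exact add_mem (add_mem (neg_mem (hφ _ n)) h2') h5
  set φ : k →+* A :=
    { toFun := φ₀, map_one' := hone, map_mul' := hmul,
      map_zero' := hzero, map_add' := hadd } with hφdef
  refine ⟨φ, ?_, ?_⟩
  · ext x
    exact hres x
  · intro ψ hψ
    ext x
    apply hsep
    intro n
    have hx : x = (E n x) ^ p ^ n := (hEpow n x).symm
    have h1 : residue A (ψ (E n x)) = residue A (φ (E n x)) := by
      have hψ' : residue A (ψ (E n x)) = E n x := by
        have := congrArg (fun g => g (E n x)) hψ
        simpa using this
      rw [hψ']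
      exact (hres (E n x)).symm
    have h2 := hkey _ _ h1 n
    have h3 : ψ x = ψ (E n x) ^ p ^ n := by rw [← map_pow, ← hx]
    have h4 : φ x = φ (E n x) ^ p ^ n := by rw [← map_pow, ← hx]
    rw [h3, h4]
    exact h2
end
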